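/- Let 0 ≤ α < 1, p ≥ 1 an integer, n ≥ 1 an integer, m ≥ n a real number, and θ ∈ ℝ. Then p + Re(α m e^{iθ}/(1 + α e^{iθ})) − Re(m e^{iθ}/(1 + e^{iθ})) ≤ ((2p−n) + α(2p+n)) / (2(α+1)), provided e^{iθ} ≠ −1. -/

import Mathlib

open Complex

set_option maxHeartbeats 1000000 in
theorem stmt_10 (α : ℝ) (hα0 : 0 ≤ α) (hα1 : α < 1) (p n : ℕ) (hp : 1 ≤ p) (hn : 1 ≤ n)
    (m θ : ℝ) (hm : (n : ℝ) ≤ m) (hθ : Complex.exp (θ * I) ≠ -1) :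
    (p : ℝ) + ((α : ℂ) * m * Complex.exp (θ * I) / (1 + α * Complex.exp (θ * I))).re -
        ((m : ℂ) * Complex.exp (θ * I) / (1 + Complex.exp (θ * I))).re ≤
      ((2 * p - n : ℝ) + α * (2 * p + n)) / (2 * (α + 1)) := by
  set c := Real.cos θ with hcdef
  set s := Real.sin θ with hsdef
  have hsc : s ^ 2 + c ^ 2 = 1 := Real.sin_sq_add_cos_sq θ
  have hexp : Complex.exp (θ * I) = (c : ℂ) + (s : ℂ) * I := by
    rw [Complex.exp_mul_I, ← Complex.ofReal_cos, ← Complex.ofReal_sin]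
  have hc2 : c ≤ 1 := Real.cos_le_one θ
  have hc1 : -1 < c := by
    rcases lt_or_eq_of_le (Real.neg_one_le_cos θ) with h | h
    · exact h
    · exfalso; apply hθ
      have hs0 : s = 0 := by nlinarith
      have hcm : c = -1 := h.symm
      rw [hexp, hs0, hcm]; simp
  have hD1 : (0:ℝ) < 1 + α ^ 2 + 2 * α * c := by nlinarith
  have hn' : (1:ℝ) ≤ n := by exact_mod_cast hn
  have hm1 : (1:ℝ) ≤ m := le_trans hn' hm
  have hA : (0:ℝ) < α + 1 := by linarith
  have e2 : ((m : ℂ) * Complex.exp (θ * I) / (1 + Complex.exp (θ * I))).re = m / 2 := by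
    rw [hexp, Complex.div_re]
    simp [Complex.normSq_apply]
    ring_nf
    have h2 : 1 + c * 2 + c ^ 2 + s ^ 2 = 2 * (1 + c) := by nlinarith
    rw [h2]
    have h3 : (1:ℝ) + c ≠ 0 := by linarith
    field_simp
    linear_combination hsc
  have e1 : ((α : ℂ) * m * Complex.exp (θ * I) / (1 + α * Complex.exp (θ * I))).re
      = α * m * (α + c) / (1 + α ^ 2 + 2 * α * c) := by
    rw [hexp, Complex.div_re]
    simp [Complex.normSq_apply]
    ring_nf
    have h2 : 1 + α * c * 2 + α ^ 2 * c ^ 2 + α ^ 2 * s ^ 2 = 1 + α * c * 2 + α ^ 2 := by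
      nlinarith
    rw [h2]
    have hD : (1:ℝ) + α * c * 2 + α ^ 2 ≠ 0 := by nlinarith
    field_simp
    linear_combination (α ^ 2) * hsc
  rw [e1, e2]
  have key : α * m * (α + c) / (1 + α ^ 2 + 2 * α * c) ≤ α * m / (α + 1) := by
    rw [div_le_div_iff₀ hD1 hA]
    nlinarith [mul_nonneg (mul_nonneg (mul_nonneg hα0 (by linarith : (0:ℝ) ≤ m))
      (by linarith : (0:ℝ) ≤ 1 - α)) (by linarith : (0:ℝ) ≤ 1 - c)]
  have e3 : (p:ℝ) + α * m / (α + 1) - m / 2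
      = (2 * p * (α + 1) + m * (α - 1)) / (2 * (α + 1)) := by
    field_simp
    ring
  have step : (2 * (p:ℝ) * (α + 1) + m * (α - 1)) / (2 * (α + 1))
      ≤ ((2 * p - n : ℝ) + α * (2 * p + n)) / (2 * (α + 1)) := by
    rw [div_le_div_iff₀ (by linarith) (by linarith)]
    nlinarith [mul_nonneg (sub_nonneg.2 hm) (by linarith : (0:ℝ) ≤ 1 - α)]
  calc (p:ℝ) + α * m * (α + c) / (1 + α ^ 2 + 2 * α * c) - m / 2
      ≤ (p:ℝ) + α * m / (α + 1) - m / 2 := by linarith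
    _ = (2 * (p:ℝ) * (α + 1) + m * (α - 1)) / (2 * (α + 1)) := e3
    _ ≤ ((2 * p - n : ℝ) + α * (2 * p + n)) / (2 * (α + 1)) := step
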